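/- Let α satisfy φ < α ≤ 2, where φ = (1 + √5)/2 is the golden ratio, and let n₁, n₂, m₁, m₂ be positive integers with n₁ ≤ α·n₂ and n₂ ≤ α·n₁. Then G_α(n₁, m₁) + G_α(n₂, m₂) + n₁ + n₂ ≤ G_α(n₁ + n₂, m₁ + m₂), where G_α(n, m) = n·(d_α − 1 + c_α·log₂ m) (with d_α taken to be d₂ = 6 − c₂·(3·log₂ 3 − 1) when α = 2). -/

import Mathlib

open Real

/-- Gibbs' inequality specialized to two terms. -/
lemma gibbs_two (a b x y : ℝ) (ha : 0 < a) (hb : 0 < b) (hx : 0 < x) (hy : 0 < y) :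
    (a + b) * Real.log (a + b) - a * Real.log a - b * Real.log b ≤
      (a + b) * Real.log (x + y) - a * Real.log x - b * Real.log y := by
  have hs : 0 < a + b := by linarith
  have hm : 0 < x + y := by linarith
  have t1 : 0 < (a + b) * x / ((x + y) * a) := by positivity
  have t2 : 0 < (a + b) * y / ((x + y) * b) := by positivity
  have l1 := Real.log_le_sub_one_of_pos t1
  have l2 := Real.log_le_sub_one_of_pos t2
  have e1 : Real.log ((a + b) * x / ((x + y) * a)) =
      Real.log (a + b) + Real.log x - (Real.log (x + y) + Real.log a) := by
    rw [Real.log_div (by positivity) (by positivity), Real.log_mul hs.ne' hx.ne',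
      Real.log_mul hm.ne' ha.ne']
  have e2 : Real.log ((a + b) * y / ((x + y) * b)) =
      Real.log (a + b) + Real.log y - (Real.log (x + y) + Real.log b) := by
    rw [Real.log_div (by positivity) (by positivity), Real.log_mul hs.ne' hy.ne',
      Real.log_mul hm.ne' hb.ne']
  rw [e1] at l1
  rw [e2] at l2
  have q1 : a * (Real.log (a + b) + Real.log x - (Real.log (x + y) + Real.log a)) ≤
      (a + b) * x / (x + y) - a := by
    have := mul_le_mul_of_nonneg_left l1 ha.le
    calc a * (Real.log (a + b) + Real.log x - (Real.log (x + y) + Real.log a)) ≤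
        a * ((a + b) * x / ((x + y) * a) - 1) := this
      _ = (a + b) * x / (x + y) - a := by field_simp
  have q2 : b * (Real.log (a + b) + Real.log y - (Real.log (x + y) + Real.log b)) ≤
      (a + b) * y / (x + y) - b := by
    have := mul_le_mul_of_nonneg_left l2 hb.le
    calc b * (Real.log (a + b) + Real.log y - (Real.log (x + y) + Real.log b)) ≤
        b * ((a + b) * y / ((x + y) * b) - 1) := this
      _ = (a + b) * y / (x + y) - b := by field_simp
  have hsum : (a + b) * x / (x + y) + (a + b) * y / (x + y) = a + b := by
    field_simp
  nlinarith [q1, q2]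

lemma ent_eq (a b : ℝ) (ha : 0 < a) (hb : 0 < b) :
    (a + b) * Real.binEntropy (a / (a + b)) =
      (a + b) * Real.log (a + b) - a * Real.log a - b * Real.log b := by
  have hs : 0 < a + b := by linarith
  rw [Real.binEntropy]
  have h2 : 1 - a / (a + b) = b / (a + b) := by field_simp; ring
  rw [h2, inv_div, inv_div, Real.log_div hs.ne' ha.ne', Real.log_div hs.ne' hb.ne']
  field_simp
  ring

lemma binEntropy_ge_of_mem (a p : ℝ) (ha0 : 0 < a) (ha : a ≤ 1 / 2) (hap : a ≤ p)
    (hpa : p ≤ 1 - a) : Real.binEntropy a ≤ Real.binEntropy p := by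
  have h2 : (2:ℝ)⁻¹ = 1 / 2 := by norm_num
  rcases le_or_gt p (1 / 2) with h | h
  · exact Real.binEntropy_strictMonoOn.monotoneOn
      ⟨ha0.le, by rw [h2]; linarith⟩ ⟨by linarith, by rw [h2]; linarith⟩ hap
  · rw [← Real.binEntropy_one_sub p]
    exact Real.binEntropy_strictMonoOn.monotoneOn
      ⟨ha0.le, by rw [h2]; linarith⟩
      ⟨by linarith, by rw [h2]; linarith⟩ (by linarith)



open Real

/-- The constant `c_α = (α+1)/((α+1)·log₂(α+1) − α·log₂ α)`. -/
noncomputable def cA (α : ℝ) : ℝ :=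
  (α + 1) / ((α + 1) * logb 2 (α + 1) - α * logb 2 α)

/-- The constant `c₂ = 3 / log₂(27/4)`. -/
noncomputable def c2 : ℝ := 3 / logb 2 (27 / 4)

/-- The constant `d₂ = 6 − c₂·(3·log₂ 3 − 1)`. -/
noncomputable def d2 : ℝ := 6 - c2 * (3 * logb 2 3 - 1)

/-- `k₀(α)` is the least `ℓ ∈ ℕ` such that `(α² − α − 1)/(α − 1) ≥ α^(−ℓ)`. -/
noncomputable def k0 (α : ℝ) : ℕ :=
  sInf {ℓ : ℕ | (α ^ 2 - α - 1) / (α - 1) ≥ α ^ (-(ℓ : ℝ))}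

/-- The constant `d_α`, taken to be `d₂` when `α = 2`. -/
noncomputable def dA (α : ℝ) : ℝ :=
  if α = 2 then d2
  else 2 ^ (k0 α + 1) * max ((k0 α : ℝ) + 1) 3 * (2 * α - 1) / (α - 1) + 1

/-- `G_α(n, m) = n·(d_α − 1 + c_α·log₂ m)`. -/
noncomputable def G (α : ℝ) (n m : ℕ) : ℝ := (n : ℝ) * (dA α - 1 + cA α * logb 2 m)

set_option maxHeartbeats 1600000 in
/-- Lemma 9: for `φ < α ≤ 2`, if `n₁ ≤ α·n₂` and `n₂ ≤ α·n₁` then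
`G_α(n₁,m₁) + G_α(n₂,m₂) + n₁ + n₂ ≤ G_α(n₁+n₂, m₁+m₂)`. -/
theorem G_merge_bound (α : ℝ) (hφ : (1 + Real.sqrt 5) / 2 < α) (hα2 : α ≤ 2)
    (n₁ n₂ m₁ m₂ : ℕ) (hn₁ : 0 < n₁) (hn₂ : 0 < n₂) (hm₁ : 0 < m₁) (hm₂ : 0 < m₂)
    (h1 : (n₁ : ℝ) ≤ α * n₂) (h2 : (n₂ : ℝ) ≤ α * n₁) :
    G α n₁ m₁ + G α n₂ m₂ + n₁ + n₂ ≤ G α (n₁ + n₂) (m₁ + m₂) := by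
  have hα1 : 1 < α := by
    nlinarith [Real.sq_sqrt (by norm_num : (5:ℝ) ≥ 0), Real.sqrt_nonneg 5]
  have hα0 : 0 < α := by linarith
  have hα1' : 0 < α + 1 := by linarith
  set E : ℝ := (α + 1) * Real.log (α + 1) - α * Real.log α with hEdef
  set a : ℝ := 1 / (α + 1) with hadef
  have ha0 : 0 < a := by positivity
  have ha12 : a ≤ 1 / 2 := by
    rw [hadef, div_le_div_iff₀ hα1' (by norm_num)]; linarith
  -- E = (α+1) * binEntropy a
  have hE : E = (α + 1) * Real.binEntropy a := by
    have h1a : 1 - a = α / (α + 1) := by rw [hadef]; field_simp; ring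
    rw [Real.binEntropy, h1a, hadef, one_div, inv_inv, inv_div,
      Real.log_div hα1'.ne' hα0.ne']
    field_simp
    ring
  have hEpos : 0 < E := by
    rw [hE]
    exact mul_pos hα1' (Real.binEntropy_pos ha0 (by linarith))
  -- real casts
  have hn₁' : (0:ℝ) < n₁ := by exact_mod_cast hn₁
  have hn₂' : (0:ℝ) < n₂ := by exact_mod_cast hn₂
  have hm₁' : (0:ℝ) < m₁ := by exact_mod_cast hm₁
  have hm₂' : (0:ℝ) < m₂ := by exact_mod_cast hm₂
  set S : ℝ := (n₁ : ℝ) + n₂ with hSdef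
  have hS : 0 < S := by positivity
  -- fraction p = n₁ / S is in [a, 1-a]
  set p : ℝ := (n₁ : ℝ) / S with hpdef
  have hap : a ≤ p := by
    rw [hadef, hpdef, div_le_div_iff₀ hα1' hS]; linarith
  have hpa : p ≤ 1 - a := by
    have h1a : 1 - a = α / (α + 1) := by rw [hadef]; field_simp; ring
    rw [hpdef, h1a, div_le_div_iff₀ hS hα1', hSdef]; nlinarith [h1]
  -- entropy chain
  have hent : S * E ≤ (α + 1) * (S * Real.log ((m₁ : ℝ) + m₂)
      - n₁ * Real.log m₁ - n₂ * Real.log m₂) := by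
    have c1 : Real.binEntropy a ≤ Real.binEntropy p :=
      binEntropy_ge_of_mem a p ha0 ha12 hap hpa
    have c2 : S * Real.binEntropy p
        = S * Real.log S - n₁ * Real.log n₁ - n₂ * Real.log n₂ := by
      rw [hpdef, hSdef]; exact ent_eq (n₁ : ℝ) (n₂ : ℝ) hn₁' hn₂'
    have c3 := gibbs_two (n₁ : ℝ) (n₂ : ℝ) (m₁ : ℝ) (m₂ : ℝ) hn₁' hn₂' hm₁' hm₂'
    have c4 : S * E = (α + 1) * (S * Real.binEntropy a) := by rw [hE]; ring
    rw [c4]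
    have c5 : S * Real.binEntropy a ≤ S * Real.log ((m₁ : ℝ) + m₂)
        - n₁ * Real.log m₁ - n₂ * Real.log m₂ := by
      have h6 := mul_le_mul_of_nonneg_left c1 hS.le
      rw [c2] at h6
      rw [hSdef] at h6 ⊢
      linarith [c3, h6]
    exact mul_le_mul_of_nonneg_left c5 hα1'.le
  -- c_α in terms of E
  have hlog2 : (0:ℝ) < Real.log 2 := Real.log_pos one_lt_two
  have hden : (α + 1) * Real.logb 2 (α + 1) - α * Real.logb 2 α = E / Real.log 2 := by
    rw [Real.logb, Real.logb, hEdef]; ring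
  have hcA : cA α = (α + 1) * Real.log 2 / E := by
    rw [cA, hden, div_div_eq_mul_div]
  -- key inequality with logb
  have hkey : S ≤ cA α * (S * Real.logb 2 ((m₁ : ℝ) + m₂)
      - n₁ * Real.logb 2 m₁ - n₂ * Real.logb 2 m₂) := by
    have hrw : cA α * (S * Real.logb 2 ((m₁ : ℝ) + m₂)
        - n₁ * Real.logb 2 m₁ - n₂ * Real.logb 2 m₂)
        = (α + 1) * (S * Real.log ((m₁ : ℝ) + m₂)
          - n₁ * Real.log m₁ - n₂ * Real.log m₂) / E := by
      rw [hcA, Real.logb, Real.logb, Real.logb]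
      field_simp
    rw [hrw, le_div_iff₀ hEpos]
    linarith [hent]
  -- conclude
  simp only [G]
  push_cast
  rw [hSdef] at hkey
  have expand : ((n₁:ℝ) + n₂) * (dA α - 1 + cA α * Real.logb 2 ((m₁:ℝ) + m₂))
      - ((n₁:ℝ) * (dA α - 1 + cA α * Real.logb 2 (m₁:ℝ))
        + (n₂:ℝ) * (dA α - 1 + cA α * Real.logb 2 (m₂:ℝ)))
      = cA α * (((n₁:ℝ) + n₂) * Real.logb 2 ((m₁:ℝ) + m₂)
        - (n₁:ℝ) * Real.logb 2 (m₁:ℝ) - (n₂:ℝ) * Real.logb 2 (m₂:ℝ)) := by ring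
  linarith [hkey, expand]
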